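/- Let A be the free group on generators α_1, ..., α_n and let E : A → ℤ⟨⟨X_1,...,X_n⟩⟩ be the Magnus expansion, defined by E(α_i) = 1 + X_i and E(α_i⁻¹) = 1 - X_i + X_i² - X_i³ + ⋯. Then for any element x in the q-th term A_q of the lower central series of A, E(x) = 1 + (terms of degree ≥ q). -/

import Mathlib

/-- The ring `ℤ⟨⟨X_i : i ∈ σ⟩⟩` of formal power series in non-commuting variables,
realized as coefficient functions on words (monomials) in the alphabet `σ`. -/
def NCSeries (σ : Type*) : Type _ := List σ → ℤ

instance {σ : Type*} : AddCommGroup (NCSeries σ) :=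
  inferInstanceAs (AddCommGroup (List σ → ℤ))

instance {σ : Type*} : One (NCSeries σ) :=
  ⟨fun w => match w with | [] => 1 | _ => 0⟩

/-- Multiplication of non-commutative power series: convolution over all
splittings of a word. -/
instance {σ : Type*} : Mul (NCSeries σ) :=
  ⟨fun f g => fun w => ∑ i ∈ Finset.range (w.length + 1), f (w.take i) * g (w.drop i)⟩

/-- The variable `X_j`, as a power series. -/
def Xvar {σ : Type*} [DecidableEq σ] (j : σ) : NCSeries σ :=
  fun w => if w = [j] then 1 else 0

/-- The Magnus expansion of a single letter: `α_i ↦ 1 + X_i` and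
`α_i⁻¹ ↦ 1 - X_i + X_i² - ⋯`. -/
def letterE {σ : Type*} [DecidableEq σ] (l : σ × Bool) : NCSeries σ := fun w =>
  if l.2 then (if w = [] ∨ w = [l.1] then (1 : ℤ) else 0)
  else (if ∀ a ∈ w, a = l.1 then ((-1) ^ w.length : ℤ) else 0)

/-- The Magnus expansion `E : FreeGroup σ → ℤ⟨⟨X_i : i ∈ σ⟩⟩`, computed as the
product of the Magnus expansions of the letters of the reduced word. -/
def magnus {σ : Type*} [DecidableEq σ] (x : FreeGroup σ) : NCSeries σ :=
  (FreeGroup.toWord x).foldr (fun l acc => letterE l * acc) 1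

/-- The `q`-th term of the lower central series, indexed as in Milnor's paper:
`lcs G 1 = G`, `lcs G (q+1) = [G, lcs G q]`. -/
def lcs (G : Type*) [Group G] (q : ℕ) : Subgroup G := (⊤ : Subgroup G).lowerCentralSeries (q - 1)

namespace NCAux

variable {σ : Type*}

open scoped commutatorElement

theorem mul_apply (f g : NCSeries σ) (w : List σ) :
    (f * g) w = ∑ i ∈ Finset.range (w.length + 1), f (w.take i) * g (w.drop i) := rfl

theorem one_apply_nil : (1 : NCSeries σ) [] = 1 := rfl
theorem one_apply_ne (w : List σ) (h : w ≠ []) : (1 : NCSeries σ) w = 0 := by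
  cases w with
  | nil => exact absurd rfl h
  | cons x t => rfl

theorem add_apply (f g : NCSeries σ) (w : List σ) : (f + g) w = f w + g w := rfl
theorem sub_apply (f g : NCSeries σ) (w : List σ) : (f - g) w = f w - g w := rfl
theorem neg_apply (f : NCSeries σ) (w : List σ) : (-f) w = -(f w) := rfl
theorem zero_apply (w : List σ) : (0 : NCSeries σ) w = 0 := rfl

theorem one_mul' (f : NCSeries σ) : 1 * f = f := by
  funext w
  rw [mul_apply, Finset.sum_eq_single 0]
  · rw [List.take_zero, List.drop_zero, one_apply_nil, one_mul]
  · intro i hi hne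
    rw [one_apply_ne, zero_mul]
    intro h
    have := congrArg List.length h
    simp only [List.length_take, List.length_nil] at this
    simp only [Finset.mem_range] at hi
    exact hne (by omega)
  · intro h; simp at h

theorem mul_one' (f : NCSeries σ) : f * 1 = f := by
  funext w
  rw [mul_apply, Finset.sum_eq_single w.length]
  · rw [List.take_length, List.drop_length, one_apply_nil, mul_one]
  · intro i hi hne
    rw [one_apply_ne, mul_zero]
    intro h
    have := congrArg List.length h
    simp only [List.length_drop, List.length_nil] at this
    simp only [Finset.mem_range] at hi
    exact hne (by omega)
  · intro h; simp at h

theorem mul_assoc' (f g h : NCSeries σ) : f * g * h = f * (g * h) := by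
  funext w
  set n := w.length with hn
  have L : (f * g * h) w = ∑ j ∈ Finset.Ico 0 (n+1), ∑ i ∈ Finset.Ico 0 (j+1),
      f (w.take i) * ((g ((w.drop i).take (j - i))) * h (w.drop j)) := by
    rw [mul_apply]
    rw [Finset.range_eq_Ico]
    refine Finset.sum_congr rfl ?_
    intro j hj
    simp only [Finset.mem_Ico] at hj
    have hjn : j ≤ n := by omega
    rw [mul_apply, Finset.sum_mul, List.length_take, ← hn, min_eq_left hjn,
      Finset.range_eq_Ico]
    refine Finset.sum_congr rfl ?_
    intro i hi
    simp only [Finset.mem_Ico] at hi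
    rw [List.take_take, min_eq_left (by omega), List.drop_take, mul_assoc]
  have R : (f * (g * h)) w = ∑ i ∈ Finset.Ico 0 (n+1), ∑ j ∈ Finset.Ico i (n+1),
      f (w.take i) * ((g ((w.drop i).take (j - i))) * h (w.drop j)) := by
    rw [mul_apply, Finset.range_eq_Ico]
    refine Finset.sum_congr rfl ?_
    intro i hi
    simp only [Finset.mem_Ico] at hi
    have hin : i ≤ n := by omega
    rw [mul_apply, Finset.mul_sum, List.length_drop, ← hn]
    rw [Finset.sum_Ico_eq_sum_range, show n + 1 - i = n - i + 1 by omega]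
    refine Finset.sum_congr rfl ?_
    intro k hk
    rw [List.drop_drop, Nat.add_sub_cancel_left]
  rw [L, R, Finset.sum_Ico_Ico_comm]

theorem left_distrib' (f g h : NCSeries σ) : f * (g + h) = f * g + f * h := by
  funext w
  simp only [mul_apply, add_apply, mul_add, Finset.sum_add_distrib]

theorem right_distrib' (f g h : NCSeries σ) : (f + g) * h = f * h + g * h := by
  funext w
  simp only [mul_apply, add_apply, add_mul, Finset.sum_add_distrib]

theorem zero_mul' (f : NCSeries σ) : 0 * f = 0 := by
  funext w; simp [mul_apply, zero_apply]

theorem mul_zero' (f : NCSeries σ) : f * 0 = 0 := by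
  funext w; simp [mul_apply, zero_apply]

instance : Ring (NCSeries σ) where
  __ := (inferInstance : AddCommGroup (NCSeries σ))
  left_distrib := left_distrib'
  right_distrib := right_distrib'
  zero_mul := zero_mul'
  mul_zero := mul_zero'
  mul_assoc := mul_assoc'
  one_mul := one_mul'
  mul_one := mul_one'

-- check defeq of instances after Ring
example (f g : NCSeries σ) (w : List σ) :
    (f * g) w = ∑ i ∈ Finset.range (w.length + 1), f (w.take i) * g (w.drop i) := by
  rw [mul_apply]

theorem mul_apply_nil (f g : NCSeries σ) : (f * g) [] = f [] * g [] := by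
  rw [mul_apply]; simp

/-- terms of degree ≥ q -/
def Fc (q : ℕ) (f : NCSeries σ) : Prop := ∀ w : List σ, w.length < q → f w = 0

theorem Fc.add {q : ℕ} {f g : NCSeries σ} (hf : Fc q f) (hg : Fc q g) : Fc q (f + g) := by
  intro w hw; rw [add_apply, hf w hw, hg w hw, add_zero]

theorem Fc.neg' {q : ℕ} {f : NCSeries σ} (hf : Fc q f) : Fc q (-f) := by
  intro w hw; rw [neg_apply, hf w hw, neg_zero]

theorem Fc.sub {q : ℕ} {f g : NCSeries σ} (hf : Fc q f) (hg : Fc q g) : Fc q (f - g) := by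
  intro w hw; rw [sub_apply, hf w hw, hg w hw, sub_zero]

theorem Fc.mul_right {q : ℕ} {f : NCSeries σ} (g : NCSeries σ) (hf : Fc q f) :
    Fc q (f * g) := by
  intro w hw; rw [mul_apply]
  refine Finset.sum_eq_zero fun i hi => ?_
  rw [hf (w.take i) (by rw [List.length_take]; omega), zero_mul]

theorem Fc.mul_left {q : ℕ} (f : NCSeries σ) {g : NCSeries σ} (hg : Fc q g) :
    Fc q (f * g) := by
  intro w hw; rw [mul_apply]
  refine Finset.sum_eq_zero fun i hi => ?_
  rw [hg (w.drop i) (by rw [List.length_drop]; omega), mul_zero]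

theorem Fc.mul {p q : ℕ} {f g : NCSeries σ} (hf : Fc p f) (hg : Fc q g) :
    Fc (p + q) (f * g) := by
  intro w hw; rw [mul_apply]
  refine Finset.sum_eq_zero fun i hi => ?_
  simp only [Finset.mem_range] at hi
  rcases lt_or_ge i p with h | h
  · rw [hf (w.take i) (by rw [List.length_take]; omega), zero_mul]
  · rw [hg (w.drop i) (by rw [List.length_drop]; omega), mul_zero]

/-- c * g ∈ Fc q, g [] = 1  ⟹  c ∈ Fc q -/
theorem inv_filt {q : ℕ} {c g : NCSeries σ} (hg : g [] = 1) (hd : Fc q (c * g)) : Fc q c := by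
  have key : ∀ N, ∀ w : List σ, w.length < N → w.length < q → c w = 0 := by
    intro N
    induction N with
    | zero => intro w hw; omega
    | succ N ih =>
      intro w hw hq
      have hcg := hd w hq
      rw [mul_apply, Finset.sum_range_succ, List.take_length, List.drop_length, hg,
        mul_one] at hcg
      have hz : ∀ i ∈ Finset.range w.length, c (w.take i) * g (w.drop i) = 0 := by
        intro i hi
        simp only [Finset.mem_range] at hi
        rw [ih (w.take i) (by rw [List.length_take]; omega)
          (by rw [List.length_take]; omega), zero_mul]
      rw [Finset.sum_eq_zero hz, zero_add] at hcg
      exact hcg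
  intro w hw
  exact key (w.length + 1) w (by omega) hw

section Letters
variable [DecidableEq σ]

theorem letterE_true (a : σ) : letterE (a, true) = 1 + Xvar a := by
  funext w
  rcases w with _ | ⟨x, t⟩
  · simp [letterE, Xvar, add_apply, one_apply_nil]
  · rw [add_apply, one_apply_ne _ (by simp), zero_add]
    simp only [letterE, Xvar]
    norm_num
    simp

theorem letterE_false_apply (a : σ) (w : List σ) :
    letterE (a, false) w = if ∀ e ∈ w, e = a then ((-1) ^ w.length : ℤ) else 0 := rfl

theorem letterE_false_cons (a x : σ) (t : List σ) :
    letterE (a, false) (x :: t) = if x = a then -(letterE (a, false) t) else 0 := by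
  simp only [letterE_false_apply, List.forall_mem_cons, List.length_cons, pow_succ]
  by_cases hx : x = a
  · simp only [hx, true_and, if_true]
    split
    · ring
    · simp
  · simp [hx]

theorem letterE_nil (l : σ × Bool) : letterE l [] = 1 := by
  rcases l with ⟨a, b⟩; cases b <;> simp [letterE]

theorem Xvar_mul_nil (a : σ) (v : NCSeries σ) : (Xvar a * v) [] = 0 := by
  rw [mul_apply_nil, Xvar]; simp

theorem Xvar_mul_cons (a : σ) (v : NCSeries σ) (x : σ) (t : List σ) :
    (Xvar a * v) (x :: t) = if x = a then v t else 0 := by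
  rw [mul_apply, Finset.sum_eq_single 1]
  · simp only [List.take_succ_cons, List.take_zero, List.drop_succ_cons, List.drop_zero, Xvar]
    by_cases hx : x = a <;> simp [hx]
  · intro b hb hne
    simp only [Finset.mem_range, List.length_cons] at hb
    rw [Xvar, if_neg, zero_mul]
    intro h
    have := congrArg List.length h
    simp only [List.length_take, List.length_cons, List.length_nil] at this
    omega
  · intro h
    simp only [Finset.mem_range, List.length_cons] at h
    omega

theorem mul_Xvar_apply (v : NCSeries σ) (a : σ) (w : List σ) :
    (v * Xvar a) w =
      if w.drop (w.length - 1) = [a] then v (w.take (w.length - 1)) else 0 := by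
  rw [mul_apply, Finset.sum_eq_single (w.length - 1)]
  · rw [Xvar]
    by_cases h : w.drop (w.length - 1) = [a] <;> simp [h]
  · intro b hb hne
    simp only [Finset.mem_range] at hb
    rw [Xvar, if_neg, mul_zero]
    intro h
    have := congrArg List.length h
    simp only [List.length_drop, List.length_cons, List.length_nil] at this
    omega
  · intro h
    simp only [Finset.mem_range] at h
    omega

theorem letterE_true_mul_false (a : σ) :
    letterE (a, true) * letterE (a, false) = 1 := by
  rw [letterE_true, add_mul, one_mul]
  funext w
  rcases w with _ | ⟨x, t⟩
  · rw [add_apply, Xvar_mul_nil, letterE_nil, one_apply_nil, add_zero]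
  · rw [add_apply, Xvar_mul_cons, letterE_false_cons, one_apply_ne _ (by simp)]
    by_cases hx : x = a <;> simp [hx]

theorem letterE_false_mul_true (a : σ) :
    letterE (a, false) * letterE (a, true) = 1 := by
  rw [letterE_true, mul_add, mul_one]
  funext w
  rcases w with _ | ⟨x, t⟩
  · rw [add_apply, mul_Xvar_apply, letterE_nil, one_apply_nil]
    simp
  · set w := x :: t with hwdef
    have hwne : w ≠ [] := by simp [hwdef]
    rw [add_apply, mul_Xvar_apply, one_apply_ne _ hwne]
    by_cases hall : ∀ e ∈ w, e = a
    · have hlen : 1 ≤ w.length := by simp [hwdef]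
      have hdrop : w.drop (w.length - 1) = [a] := by
        have h1 : (w.drop (w.length - 1)).length = 1 := by
          rw [List.length_drop]; omega
        obtain ⟨b, hb⟩ := List.length_eq_one_iff.mp h1
        have hbw : b ∈ w := List.drop_subset _ w (hb ▸ List.mem_singleton_self b)
        rw [hb, hall b hbw]
      rw [if_pos hdrop, letterE_false_apply, letterE_false_apply,
        if_pos hall, if_pos fun e he => hall e (List.take_subset _ w he)]
      rw [List.length_take, min_eq_left (by omega),
        show w.length = (w.length - 1) + 1 by omega, pow_succ]
      rw [show w.length - 1 + 1 - 1 = w.length - 1 by omega]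
      ring
    · rw [letterE_false_apply, if_neg hall, zero_add]
      by_cases hdrop : w.drop (w.length - 1) = [a]
      · rw [if_pos hdrop, letterE_false_apply, if_neg, ]
        push_neg at hall
        obtain ⟨e, hew, hea⟩ := hall
        intro hta
        have : e ∈ w.take (w.length - 1) ++ w.drop (w.length - 1) := by
          rw [List.take_append_drop]; exact hew
        rcases List.mem_append.mp this with h | h
        · exact hea (hta e h)
        · rw [hdrop] at h; exact hea (List.mem_singleton.mp h)
      · rw [if_neg hdrop]

end Letters

section Words
variable [DecidableEq σ]

/-- expansion of an unreduced word -/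
def wordE (L : List (σ × Bool)) : NCSeries σ :=
  L.foldr (fun l acc => letterE l * acc) 1

theorem wordE_nil : wordE ([] : List (σ × Bool)) = 1 := rfl

theorem wordE_cons (l : σ × Bool) (L : List (σ × Bool)) :
    wordE (l :: L) = letterE l * wordE L := rfl

theorem wordE_append (L₁ L₂ : List (σ × Bool)) :
    wordE (L₁ ++ L₂) = wordE L₁ * wordE L₂ := by
  induction L₁ with
  | nil => rw [List.nil_append, wordE_nil, one_mul]
  | cons l L ih => rw [List.cons_append, wordE_cons, wordE_cons, ih, mul_assoc]

theorem letterE_mul_letterE (a : σ) (b : Bool) :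
    letterE (a, b) * letterE (a, !b) = 1 := by
  cases b
  · exact letterE_false_mul_true a
  · exact letterE_true_mul_false a

theorem wordE_step {L₁ L₂ : List (σ × Bool)} (h : FreeGroup.Red.Step L₁ L₂) :
    wordE L₁ = wordE L₂ := by
  cases h with
  | @not L₁ L₂ x b =>
    rw [wordE_append, wordE_append, wordE_cons, wordE_cons,
      show letterE (x, b) * (letterE (x, !b) * wordE L₂) =
        letterE (x, b) * letterE (x, !b) * wordE L₂ from (mul_assoc _ _ _).symm,
      letterE_mul_letterE, one_mul]

theorem wordE_red {L₁ L₂ : List (σ × Bool)} (h : FreeGroup.Red L₁ L₂) :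
    wordE L₁ = wordE L₂ := by
  induction h with
  | refl => rfl
  | tail _ hstep ih => rw [ih, wordE_step hstep]

theorem magnus_eq (x : FreeGroup σ) : magnus x = wordE x.toWord := rfl

theorem magnus_one : magnus (1 : FreeGroup σ) = 1 := by
  rw [magnus_eq, FreeGroup.toWord_one, wordE_nil]

theorem magnus_mul (x y : FreeGroup σ) : magnus (x * y) = magnus x * magnus y := by
  have h1 : x * y = FreeGroup.mk (x.toWord ++ y.toWord) := by
    rw [← FreeGroup.mul_mk, FreeGroup.mk_toWord, FreeGroup.mk_toWord]
  rw [magnus_eq, magnus_eq, magnus_eq, ← wordE_append, h1, FreeGroup.toWord_mk]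
  exact (wordE_red FreeGroup.reduce.red).symm

theorem wordE_apply_nil (L : List (σ × Bool)) : wordE L [] = 1 := by
  induction L with
  | nil => rfl
  | cons l L ih => rw [wordE_cons, mul_apply_nil, letterE_nil, ih, mul_one]

theorem magnus_apply_nil (x : FreeGroup σ) : magnus x [] = 1 := wordE_apply_nil _

theorem magnus_fc_one (x : FreeGroup σ) : Fc 1 (magnus x - 1) := by
  intro w hw
  have : w = [] := List.length_eq_zero_iff.mp (by omega)
  subst this
  rw [sub_apply, magnus_apply_nil, one_apply_nil, sub_self]

/-- the q-th dimension subgroup -/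
def Kgrp (q : ℕ) : Subgroup (FreeGroup σ) where
  carrier := {x | Fc q (magnus x - 1)}
  one_mem' := by
    intro w hw
    rw [sub_apply, magnus_one, sub_self]
  mul_mem' := by
    intro x y hx hy
    have h : magnus (x * y) - 1 =
        (magnus x - 1) * (magnus y - 1) + ((magnus x - 1) + (magnus y - 1)) := by
      rw [magnus_mul]; noncomm_ring
    show Fc q (magnus (x * y) - 1)
    rw [h]
    exact Fc.add (Fc.mul_right _ hx) (Fc.add hx hy)
  inv_mem' := by
    intro x hx
    have h1 : magnus x * magnus x⁻¹ = 1 := by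
      rw [← magnus_mul, mul_inv_cancel, magnus_one]
    have h2 : magnus x⁻¹ - 1 = (-(magnus x - 1)) * magnus x⁻¹ := by
      rw [neg_sub, sub_mul, one_mul, h1]
    show Fc q (magnus x⁻¹ - 1)
    rw [h2]
    exact Fc.mul_right _ (Fc.neg' hx)

theorem comm_key (p r : ℕ) (x y : FreeGroup σ)
    (hx : Fc p (magnus x - 1)) (hy : Fc r (magnus y - 1)) :
    Fc (p + r) (magnus ⁅x, y⁆ - 1) := by
  have hM : magnus ⁅x, y⁆ * (magnus y * magnus x) = magnus x * magnus y := by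
    rw [← magnus_mul, ← magnus_mul, ← magnus_mul]
    group
    
  have hident : (magnus ⁅x, y⁆ - 1) * (magnus y * magnus x) =
      (magnus x - 1) * (magnus y - 1) - (magnus y - 1) * (magnus x - 1) := by
    rw [sub_mul, one_mul, hM]
    noncomm_ring
  have hd : Fc (p + r) ((magnus ⁅x, y⁆ - 1) * (magnus y * magnus x)) := by
    rw [hident]
    refine Fc.sub (Fc.mul hx hy) ?_
    rw [add_comm p r]
    exact Fc.mul hy hx
  have hg : (magnus y * magnus x) [] = 1 := by
    rw [← magnus_mul]
    exact magnus_apply_nil _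
  exact inv_filt hg hd

theorem main_lemma (m : ℕ) (x : FreeGroup σ)
    (hx : x ∈ (⊤ : Subgroup (FreeGroup σ)).lowerCentralSeries m) : Fc (m + 1) (magnus x - 1) := by
  induction m generalizing x with
  | zero => exact magnus_fc_one x
  | succ m ih =>
    have hle : (⊤ : Subgroup (FreeGroup σ)).lowerCentralSeries (m + 1) ≤ Kgrp (m + 2) := by
      rw [Subgroup.lowerCentralSeries_succ]
      refine Subgroup.commutator_le.mpr ?_
      intro g hg h _
      exact comm_key (m + 1) 1 g h (ih g hg) (magnus_fc_one h)
    exact hle hx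

end Words

end NCAux

theorem stmt2 (n q : ℕ) (x : FreeGroup (Fin n))
    (hx : x ∈ lcs (FreeGroup (Fin n)) q) :
    magnus x [] = 1 ∧ ∀ w : List (Fin n), w ≠ [] → w.length < q → magnus x w = 0 := by
  have h := NCAux.main_lemma (q - 1) x hx
  constructor
  · exact NCAux.magnus_apply_nil x
  · intro w hw hq
    have h0 := h w (by omega)
    rw [NCAux.sub_apply, NCAux.one_apply_ne _ hw, sub_zero] at h0
    exact h0
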